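/- Let p ≥ 1 and let w_1, …, w_p be complex numbers with e_k(w_1, …, w_p) = 1/k! for k = 1, …, p, let λ ∈ ℂ and T > 0. Then there exists a constant C > 0 such that for every positive integer N, setting h = T/N, the N-fold iterated complex Euler path approximation satisfies |(∏_{i=1}^p (1 + w_i·λ·h))^N − e^{λT}| ≤ C·h^p; i.e., the global error of the p-step complex Euler method for ẏ = λy on [0, T] is O(h^p). -/

import Mathlib

open Finset in
lemma aux_prod_one_add {p : ℕ} (w : Fin p → ℂ) (z : ℂ) :
    ∏ i, (1 + w i * z) =
      ∑ k ∈ range (p + 1), (∑ s ∈ Finset.univ.powersetCard k, ∏ i ∈ s, w i) * z ^ k := by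
  calc ∏ i, (1 + w i * z) = ∏ i, (w i * z + 1) := by simp_rw [add_comm]
    _ = ∑ t ∈ (Finset.univ : Finset (Fin p)).powerset, ∏ i ∈ t, (w i * z) := by
        rw [Finset.prod_add]; simp
    _ = ∑ k ∈ range ((Finset.univ : Finset (Fin p)).card + 1),
          ∑ t ∈ Finset.univ.powersetCard k, ∏ i ∈ t, (w i * z) := by
        rw [Finset.powerset_card_disjiUnion]; exact Finset.sum_disjiUnion _ _ _
    _ = ∑ k ∈ range (p + 1), (∑ s ∈ Finset.univ.powersetCard k, ∏ i ∈ s, w i) * z ^ k := by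
        rw [Finset.card_fin]
        refine Finset.sum_congr rfl fun k _ => ?_
        rw [Finset.sum_mul]
        refine Finset.sum_congr rfl fun s hs => ?_
        rw [Finset.prod_mul_distrib, Finset.prod_const, (Finset.mem_powersetCard.mp hs).2]

lemma aux_pow_sub_pow {a b : ℂ} {M : ℝ} (ha : ‖a‖ ≤ M) (hb : ‖b‖ ≤ M) (N : ℕ) :
    ‖a ^ N - b ^ N‖ ≤ N * M ^ (N - 1) * ‖a - b‖ := by
  have hM : 0 ≤ M := le_trans (norm_nonneg a) ha
  rw [← geom_sum₂_mul, norm_mul]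
  gcongr
  calc ‖∑ i ∈ Finset.range N, a ^ i * b ^ (N - 1 - i)‖
      ≤ ∑ i ∈ Finset.range N, ‖a ^ i * b ^ (N - 1 - i)‖ := norm_sum_le _ _
    _ ≤ ∑ i ∈ Finset.range N, M ^ (N - 1) := by
        refine Finset.sum_le_sum fun i hi => ?_
        rw [norm_mul, norm_pow, norm_pow]
        calc ‖a‖ ^ i * ‖b‖ ^ (N - 1 - i) ≤ M ^ i * M ^ (N - 1 - i) := by
              gcongr
          _ = M ^ (N - 1) := by
              rw [← pow_add]; congr 1
              have := Finset.mem_range.mp hi; omega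
    _ = N * M ^ (N - 1) := by rw [Finset.sum_const, Finset.card_range, nsmul_eq_mul]

/-- Global error of the `p`-step complex Euler method for `ẏ = λy` on `[0, T]`.
If the elementary symmetric polynomials of the step fractions `w` satisfy
`e_k(w) = 1/k!` for `k = 1, …, p`, then there is `C > 0` such that for every
positive integer `N`, with `h = T/N`,
`|(∏ i, (1 + w i λ h))^N − e^{λT}| ≤ C h^p`. -/
theorem complex_euler_global_error (p : ℕ) (hp : 1 ≤ p) (w : Fin p → ℂ)
    (hesymm : ∀ k : ℕ, 1 ≤ k → k ≤ p →
      ∑ s ∈ Finset.univ.powersetCard k, ∏ i ∈ s, w i = 1 / (Nat.factorial k : ℂ))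
    (lam : ℂ) (T : ℝ) (hT : 0 < T) :
    ∃ C > (0 : ℝ), ∀ N : ℕ, 0 < N →
      ‖(∏ i, (1 + w i * lam * ((T / N : ℝ) : ℂ))) ^ N - Complex.exp (lam * T)‖
        ≤ C * (T / N) ^ p := by
  set E : ℝ := Real.exp (‖lam‖ * T) with hEdef
  have hE0 : (0:ℝ) < E := Real.exp_pos _
  have hE1 : (1:ℝ) ≤ E := Real.one_le_exp (by positivity)
  set N₀ : ℕ := ⌈‖lam‖ * T⌉₊ + 1 with hN₀def
  have hN₀pos : (0:ℝ) < (N₀ : ℝ) := by positivity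
  have hlamT : ‖lam‖ * T < (N₀ : ℝ) := by
    refine lt_of_le_of_lt (Nat.le_ceil _) ?_
    rw [hN₀def]; push_cast; linarith
  set C₁ : ℝ := 2 * T * E * ‖lam‖ ^ (p+1) / (Nat.factorial (p+1) : ℝ) with hC₁
  set C₂ : ℝ := 2 * E / (T / N₀) ^ p with hC₂
  have hC₁0 : 0 ≤ C₁ := by positivity
  have hC₂0 : 0 < C₂ := by positivity
  refine ⟨C₁ + C₂, by linarith, fun N hN => ?_⟩
  have hNr : (0:ℝ) < (N:ℝ) := by exact_mod_cast hN
  set h : ℝ := T / N with hhdef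
  have hh0 : 0 < h := div_pos hT hNr
  set z : ℂ := lam * (h : ℂ) with hzdef
  have hznorm : ‖z‖ = ‖lam‖ * h := by
    rw [hzdef, norm_mul, Complex.norm_real, Real.norm_of_nonneg hh0.le]
  have hNh : (N:ℝ) * h = T := by rw [hhdef]; field_simp
  -- product identity
  have hprod : (∏ i, (1 + w i * lam * ((h : ℝ) : ℂ))) =
      ∑ k ∈ Finset.range (p+1), z ^ k / (Nat.factorial k : ℂ) := by
    have e1 : ∀ i : Fin p, w i * lam * ((h:ℝ):ℂ) = w i * z := fun i => mul_assoc _ _ _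
    simp_rw [e1]
    rw [aux_prod_one_add w z]
    refine Finset.sum_congr rfl fun k hk => ?_
    rcases Nat.eq_zero_or_pos k with rfl | hk1
    · simp
    · rw [hesymm k hk1 (Nat.lt_succ_iff.mp (Finset.mem_range.mp hk))]
      rw [one_div, inv_mul_eq_div]
  have hch : ((N:ℕ):ℂ) * ((h:ℝ):ℂ) = ((T:ℝ):ℂ) := by
    rw [← Complex.ofReal_natCast, ← Complex.ofReal_mul, hNh]
  have hexpT : Complex.exp (lam * T) = Complex.exp z ^ N := by
    rw [← Complex.exp_nat_mul]
    congr 1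
    calc lam * (T:ℂ) = lam * (((N:ℕ):ℂ) * ((h:ℝ):ℂ)) := by rw [hch]
      _ = (N:ℂ) * z := by rw [hzdef]; ring
  have hS : ‖∑ k ∈ Finset.range (p+1), z ^ k / (Nat.factorial k : ℂ)‖ ≤ Real.exp ‖z‖ := by
    calc ‖∑ k ∈ Finset.range (p+1), z ^ k / (Nat.factorial k : ℂ)‖
        ≤ ∑ k ∈ Finset.range (p+1), ‖z ^ k / (Nat.factorial k : ℂ)‖ := norm_sum_le _ _
      _ = ∑ k ∈ Finset.range (p+1), ‖z‖ ^ k / (Nat.factorial k : ℝ) := by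
          refine Finset.sum_congr rfl fun k _ => ?_
          rw [norm_div, norm_pow, Complex.norm_natCast]
      _ ≤ Real.exp ‖z‖ := Real.sum_le_exp_of_nonneg (norm_nonneg z) _
  have hexpz : ‖Complex.exp z‖ ≤ Real.exp ‖z‖ := by
    rw [Complex.norm_exp]
    exact Real.exp_le_exp.mpr (Complex.re_le_norm z)
  have hpowE : Real.exp ‖z‖ ^ N = E := by
    rw [← Real.exp_nat_mul, hznorm]
    congr 1
    rw [← hNh]; ring
  have hpowE' : Real.exp ‖z‖ ^ (N - 1) ≤ E := by
    rw [← hpowE]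
    exact pow_le_pow_right₀ (Real.one_le_exp (norm_nonneg z)) (Nat.sub_le N 1)
  rw [hprod, hexpT]
  by_cases hcase : N₀ ≤ N
  · -- asymptotic regime
    have hz1 : ‖z‖ ≤ 1 := by
      rw [hznorm, hhdef, mul_div_assoc'] -- ‖lam‖ * T / N
      rw [div_le_one hNr]
      calc ‖lam‖ * T ≤ (N₀ : ℝ) := hlamT.le
        _ ≤ (N : ℝ) := by exact_mod_cast hcase
    have hloc : ‖(∑ k ∈ Finset.range (p+1), z ^ k / (Nat.factorial k : ℂ)) - Complex.exp z‖
        ≤ ‖z‖ ^ (p+1) / (Nat.factorial (p+1) : ℝ) * 2 := by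
      rw [norm_sub_rev]
      have hside : ‖z‖ / ((p+1).succ : ℝ) ≤ 1 / 2 := by
        rw [div_le_div_iff₀ (by positivity) (by norm_num)]
        have : ‖z‖ ≤ 1 := hz1
        have hp' : (1:ℝ) ≤ (p:ℝ) := by exact_mod_cast hp
        have h2 : (2:ℝ) ≤ ((p+1).succ : ℝ) := by push_cast; linarith
        nlinarith
      exact Complex.exp_bound' hside
    calc ‖(∑ k ∈ Finset.range (p+1), z ^ k / (Nat.factorial k : ℂ)) ^ N - Complex.exp z ^ N‖
        ≤ N * Real.exp ‖z‖ ^ (N-1) *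
            ‖(∑ k ∈ Finset.range (p+1), z ^ k / (Nat.factorial k : ℂ)) - Complex.exp z‖ :=
          aux_pow_sub_pow hS hexpz N
      _ ≤ N * E * (‖z‖ ^ (p+1) / (Nat.factorial (p+1) : ℝ) * 2) := by gcongr
      _ = C₁ * h ^ p := by
          rw [hznorm, hC₁, ← hNh]
          rw [mul_pow, pow_succ ‖lam‖ p]  -- not needed both; do via field_simp/ring
          field_simp
          ring
      _ ≤ (C₁ + C₂) * h ^ p := by nlinarith [pow_pos hh0 p]
  · -- finitely many N, crude bound
    push_neg at hcase
    have hexpT' : ‖Complex.exp z ^ N‖ ≤ E := by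
      rw [norm_pow, ← hpowE]
      exact pow_le_pow_left₀ (norm_nonneg _) hexpz N
    have hSN : ‖(∑ k ∈ Finset.range (p+1), z ^ k / (Nat.factorial k : ℂ)) ^ N‖ ≤ E := by
      rw [norm_pow, ← hpowE]
      exact pow_le_pow_left₀ (norm_nonneg _) hS N
    have crude : ‖(∑ k ∈ Finset.range (p+1), z ^ k / (Nat.factorial k : ℂ)) ^ N
        - Complex.exp z ^ N‖ ≤ 2 * E := by
      calc _ ≤ ‖(∑ k ∈ Finset.range (p+1), z ^ k / (Nat.factorial k : ℂ)) ^ N‖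
            + ‖Complex.exp z ^ N‖ := norm_sub_le _ _
        _ ≤ 2 * E := by linarith
    have hTN₀ : (0:ℝ) < (T / N₀) ^ p := by positivity
    have hmono : (T / N₀ : ℝ) ^ p ≤ h ^ p := by
      apply pow_le_pow_left₀ (by positivity)
      rw [hhdef]
      apply div_le_div_of_nonneg_left hT.le hNr
      exact_mod_cast hcase.le
    calc ‖(∑ k ∈ Finset.range (p+1), z ^ k / (Nat.factorial k : ℂ)) ^ N - Complex.exp z ^ N‖
        ≤ 2 * E := crude
      _ = C₂ * (T / N₀) ^ p := by rw [hC₂, div_mul_cancel₀ _ (ne_of_gt hTN₀)]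
      _ ≤ (C₁ + C₂) * h ^ p := by nlinarith
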